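/- Let R be a commutative Noetherian domain of Krull dimension two with finitely many maximal ideals, and let M be a maximal ideal of R with height M = 2. Then the cardinality of the set of height-one primes P with P ⊂ M and P contained in no other maximal ideal of R is at least ℵ₀ + |R/M|. -/

import Mathlib

open Ideal

section Aux

private lemma torsion_artinian' {A : Type*} [CommRing A] (m : Ideal A) [hm : m.IsMaximal]
    {N : Type*} [AddCommGroup N] [Module A N] [Module.Finite A N]
    (h : Module.IsTorsionBySet A N (m : Set A)) : IsArtinian A N := by
  letI : Module (A ⧸ m) N := h.module
  letI : Field (A ⧸ m) := Ideal.Quotient.field m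
  haveI : IsScalarTower A (A ⧸ m) N := h.isScalarTower
  haveI : Module.Finite (A ⧸ m) N := Module.Finite.of_restrictScalars_finite A (A ⧸ m) N
  haveI hart : IsArtinian (A ⧸ m) N := isArtinian_of_fg_of_artinian'
  let g : Submodule A N → Submodule (A ⧸ m) N := fun p =>
    { carrier := p
      add_mem' := fun ha hb => p.add_mem ha hb
      zero_mem' := p.zero_mem
      smul_mem' := by
        intro c x hx
        obtain ⟨a, rfl⟩ := Ideal.Quotient.mk_surjective c
        rw [h.mk_smul]
        exact p.smul_mem a hx }
  have hg : ∀ p q, g p ≤ g q ↔ p ≤ q := fun p q => Iff.rfl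
  rw [← monotone_stabilizes_iff_artinian]
  intro f
  obtain ⟨n, hn⟩ := IsArtinian.monotone_stabilizes
    (⟨fun n => g (OrderDual.ofDual (f n)), fun a b hab => (hg _ _).mpr (f.monotone hab)⟩ :
      ℕ →o (Submodule (A ⧸ m) N)ᵒᵈ)
  refine ⟨n, fun k hk => ?_⟩
  have h2 : g (OrderDual.ofDual (f n)) = g (OrderDual.ofDual (f k)) := hn k hk
  have h3 : (OrderDual.ofDual (f n) : Submodule A N) = OrderDual.ofDual (f k) :=
    SetLike.ext' (congrArg SetLike.coe h2 : _)
  exact congrArg OrderDual.toDual h3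

private lemma artinian_quot_pow' {A : Type*} [CommRing A] [IsNoetherianRing A]
    (m : Ideal A) [hm : m.IsMaximal] (k : ℕ) : IsArtinian A (A ⧸ (m ^ k : Ideal A)) := by
  induction k with
  | zero =>
    have : Subsingleton (A ⧸ (m ^ 0 : Ideal A)) := by
      rw [pow_zero, Ideal.one_eq_top]
      exact Ideal.Quotient.subsingleton_iff.mpr rfl
    infer_instance
  | succ k ih =>
    have hle : (m ^ (k+1) : Ideal A) ≤ m ^ k := Ideal.pow_le_pow_right (Nat.le_succ k)
    set S : Submodule A (A ⧸ (m ^ (k+1) : Ideal A)) :=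
      Submodule.map (m ^ (k+1) : Ideal A).mkQ (m ^ k : Ideal A) with hS
    refine (isArtinian_iff_submodule_quotient S).mpr ⟨?_, ?_⟩
    · haveI : Module.Finite A S := by
        have hfg : S.FG := IsNoetherian.noetherian S
        exact ⟨(Submodule.fg_top S).mpr hfg⟩
      refine torsion_artinian' m ?_
      rintro ⟨x, hx⟩ ⟨a, ha⟩
      obtain ⟨b, hb, rfl⟩ := hx
      refine Subtype.ext ?_
      show a • (m ^ (k+1) : Ideal A).mkQ b = 0
      rw [Submodule.mkQ_apply, ← Submodule.Quotient.mk_smul, Submodule.Quotient.mk_eq_zero]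
      have : a * b ∈ (m ^ (k+1) : Ideal A) := by
        rw [pow_succ]
        exact mul_comm b a ▸ Ideal.mul_mem_mul hb ha
      simpa [smul_eq_mul] using this
    · exact isArtinian_of_linearEquiv
        (Submodule.quotientQuotientEquivQuotient (m ^ (k+1) : Ideal A) (m ^ k : Ideal A) hle).symm

private lemma chain_stabilizes' {A : Type*} [CommRing A] [IsNoetherianRing A]
    (m : Ideal A) [hm : m.IsMaximal] (k : ℕ) (c : ℕ → Ideal A)
    (hmono : ∀ n, c (n+1) ≤ c n) (hc : ∀ n, m ^ k ≤ c n) :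
    ∃ n, c n = c (n + 1) := by
  haveI := artinian_quot_pow' m k
  set q := (m ^ k : Ideal A).mkQ with hq
  have hanti : ∀ {a b : ℕ}, a ≤ b → c b ≤ c a := by
    intro a b hab
    induction hab with
    | refl => exact le_rfl
    | step h ih => exact le_trans (hmono _) ih
  obtain ⟨n, hn⟩ := IsArtinian.monotone_stabilizes
    (⟨fun n => OrderDual.toDual (Submodule.map q (c n)),
      fun a b hab => Submodule.map_mono (hanti hab)⟩ :
        ℕ →o (Submodule A (A ⧸ (m ^ k : Ideal A)))ᵒᵈ)
  refine ⟨n, le_antisymm ?_ (hmono n)⟩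
  have h2 : Submodule.map q (c n) = Submodule.map q (c (n+1)) :=
    congrArg OrderDual.ofDual (hn (n+1) (Nat.le_succ n))
  have h3 : Submodule.comap q (Submodule.map q (c n))
      = Submodule.comap q (Submodule.map q (c (n+1))) := by rw [h2]
  rw [Submodule.comap_map_mkQ, Submodule.comap_map_mkQ, sup_eq_right.mpr (hc n),
    sup_eq_right.mpr (hc (n+1))] at h3
  exact le_of_eq h3

private lemma pit_local' {A : Type*} [CommRing A] [IsDomain A] [IsNoetherianRing A] [IsLocalRing A]
    {q : Ideal A} (hq : q.IsPrime) (hq0 : q ≠ ⊥) {x : A}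
    (hxq : x ∉ q) (hxm : x ∈ IsLocalRing.maximalIdeal A)
    {k : ℕ} (hpow : IsLocalRing.maximalIdeal A ^ k ≤ Ideal.span {x}) : False := by
  classical
  set B := Localization.AtPrime q with hB
  haveI : IsNoetherianRing B := IsLocalization.isNoetherianRing q.primeCompl B ‹_›
  haveI : IsDomain B := IsLocalization.isDomain_localization q.primeCompl_le_nonZeroDivisors
  set φ := algebraMap A B with hφ
  set sp : ℕ → Ideal A := fun n => ((q ^ n).map φ).comap φ with hsp
  have hsp_mono : ∀ n, sp (n+1) ≤ sp n := fun n =>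
    Ideal.comap_mono (Ideal.map_mono (Ideal.pow_le_pow_right (Nat.le_succ n)))
  have hstab : ∃ n, sp n ⊔ Ideal.span {x} = sp (n+1) ⊔ Ideal.span {x} :=
    chain_stabilizes' (IsLocalRing.maximalIdeal A) k
      (fun n => sp n ⊔ Ideal.span {x})
      (fun n => sup_le_sup_right (hsp_mono n) _)
      (fun n => le_trans hpow le_sup_right)
  obtain ⟨n, hn⟩ := hstab
  have hxunit : IsUnit (φ x) := IsLocalization.map_units B (⟨x, hxq⟩ : q.primeCompl)
  have key : sp n ≤ sp (n+1) ⊔ Ideal.span {x} * sp n := by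
    intro a ha
    have ha2 : a ∈ sp (n+1) ⊔ Ideal.span {x} := by rw [← hn]; exact Ideal.mem_sup_left ha
    obtain ⟨b, hb, z, hz, rfl⟩ := Submodule.mem_sup.mp ha2
    obtain ⟨t, rfl⟩ := Ideal.mem_span_singleton'.mp hz
    have hxt : t * x ∈ sp n := by
      have : b + t * x - b ∈ sp n := Ideal.sub_mem _ ha (hsp_mono n hb)
      simpa using this
    have ht : t ∈ sp n := by
      have : φ (t * x) ∈ (q ^ n).map φ := hxt
      rw [_root_.map_mul, mul_comm] at this
      exact (Ideal.unit_mul_mem_iff_mem _ hxunit).mp this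
    exact Submodule.add_mem_sup hb
      (mul_comm t x ▸ Ideal.mul_mem_mul (Ideal.mem_span_singleton_self x) ht)
  have hspan_jac : Ideal.span {x} ≤ Ideal.jacobson ⊥ := by
    rw [IsLocalRing.jacobson_eq_maximalIdeal ⊥ bot_ne_top]
    rwa [Ideal.span_le, Set.singleton_subset_iff]
  have hsp_eq : sp n = sp (n+1) := by
    refine le_antisymm ?_ (hsp_mono n)
    refine Submodule.le_of_le_smul_of_le_jacobson_bot (IsNoetherian.noetherian _) hspan_jac ?_
    rwa [Ideal.smul_eq_mul]
  have hmapeq : (q ^ n).map φ = (q ^ (n+1)).map φ := by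
    have h1 := congrArg (Ideal.map φ) hsp_eq
    rwa [IsLocalization.map_comap q.primeCompl B, IsLocalization.map_comap q.primeCompl B] at h1
  have hqB_jac : q.map φ ≤ Ideal.jacobson ⊥ := by
    rw [IsLocalRing.jacobson_eq_maximalIdeal ⊥ bot_ne_top,
      ← Localization.AtPrime.map_eq_maximalIdeal]
  have hbot : (q ^ n).map φ = ⊥ := by
    refine Submodule.eq_bot_of_le_smul_of_le_jacobson_bot (q.map φ) _
      (IsNoetherian.noetherian _) ?_ hqB_jac
    rw [Ideal.smul_eq_mul, ← Ideal.map_mul, mul_comm, ← pow_succ]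
    exact le_of_eq hmapeq
  obtain ⟨a, haq, ha0⟩ := Submodule.exists_mem_ne_zero_of_ne_bot hq0
  have h1 : φ a ^ n ∈ (q ^ n).map φ := by
    rw [← map_pow]
    exact Ideal.mem_map_of_mem φ (Ideal.pow_mem_pow haq n)
  have h2 : φ a ≠ 0 := fun h =>
    ha0 (IsLocalization.injective B q.primeCompl_le_nonZeroDivisors (by rw [map_zero]; exact h))
  exact pow_ne_zero n h2 (by rwa [hbot, Submodule.mem_bot] at h1)

private lemma dim_le_two_chain' {R : Type*} [CommRing R] (hdim : ringKrullDim R = 2)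
    {a b c d : Ideal R} (ha : a.IsPrime) (hb : b.IsPrime) (hc : c.IsPrime) (hd : d.IsPrime)
    (h1 : a < b) (h2 : b < c) (h3 : c < d) : False := by
  let p : LTSeries (PrimeSpectrum R) :=
    ((RelSeries.singleton _ (⟨a, ha⟩ : PrimeSpectrum R)).snoc ⟨b, hb⟩ h1).snoc ⟨c, hc⟩
      (by exact h2) |>.snoc ⟨d, hd⟩
      (by exact h3)
  have hlen : p.length = 3 := rfl
  have := Order.LTSeries.length_le_krullDim p
  rw [hlen, show Order.krullDim (PrimeSpectrum R) = ringKrullDim R from rfl, hdim] at this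
  norm_num at this

private lemma exists_prime_between' {R : Type*} [CommRing R] [IsDomain R] [IsNoetherianRing R]
    {M Q : Ideal R} (hM : M.IsMaximal) (hQ : Q.IsPrime) (hQ0 : ⊥ < Q) (hQM : Q < M)
    {x : R} (hx : x ∈ M) (hx0 : x ≠ 0) :
    ∃ P : Ideal R, P.IsPrime ∧ x ∈ P ∧ ⊥ < P ∧ P < M := by
  obtain ⟨p, hpmin, hpM⟩ := Ideal.exists_minimalPrimes_le
    (show Ideal.span {x} ≤ M by rwa [Ideal.span_le, Set.singleton_subset_iff])
  have hpprime : p.IsPrime := hpmin.1.1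
  have hxp : x ∈ p := hpmin.1.2 (Ideal.mem_span_singleton_self x)
  have hp0 : ⊥ < p := bot_lt_iff_ne_bot.mpr (fun h => hx0 (by simpa [h] using hxp))
  rcases lt_or_eq_of_le hpM with h | h
  · exact ⟨p, hpprime, hxp, hp0, h⟩
  exfalso
  subst h
  have hxQ : x ∉ Q := fun hxQ => absurd
    (hpmin.2 ⟨hQ, by rwa [Ideal.span_le, Set.singleton_subset_iff]⟩ (le_of_lt hQM))
    (not_le_of_gt hQM)
  set A := Localization.AtPrime p with hA
  haveI : IsNoetherianRing A := IsLocalization.isNoetherianRing p.primeCompl A ‹_›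
  haveI : IsDomain A := IsLocalization.isDomain_localization p.primeCompl_le_nonZeroDivisors
  set φ := algebraMap R A with hφ
  have hdisj : Disjoint (p.primeCompl : Set R) (Q : Set R) := by
    rw [Set.disjoint_left]
    intro a hac haQ
    exact hac (le_of_lt hQM haQ)
  have hqprime : (Q.map φ).IsPrime :=
    IsLocalization.isPrime_of_isPrime_disjoint p.primeCompl A Q hQ hdisj
  have hq0 : Q.map φ ≠ ⊥ := by
    obtain ⟨a, haQ, ha0⟩ := Submodule.exists_mem_ne_zero_of_ne_bot (ne_of_gt hQ0)
    intro h
    have : φ a ∈ Q.map φ := Ideal.mem_map_of_mem φ haQ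
    rw [h, Submodule.mem_bot] at this
    exact ha0 (IsLocalization.injective A p.primeCompl_le_nonZeroDivisors (by rw [map_zero]; exact this))
  have hxq' : φ x ∉ Q.map φ := by
    intro hmem
    have : x ∈ (Q.map φ).comap φ := hmem
    exact hxQ (by rw [← IsLocalization.comap_map_of_isPrime_disjoint p.primeCompl A hQ hdisj]; exact this)
  have hxm' : φ x ∈ IsLocalRing.maximalIdeal A := by
    rw [← Localization.AtPrime.map_eq_maximalIdeal]
    exact Ideal.mem_map_of_mem φ hxp
  have hrad : (Ideal.span {φ x}).radical = IsLocalRing.maximalIdeal A := by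
    rw [Ideal.radical_eq_sInf]
    apply le_antisymm
    · exact sInf_le ⟨by rwa [Ideal.span_le, Set.singleton_subset_iff],
        (IsLocalRing.maximalIdeal.isMaximal A).isPrime⟩
    · refine le_sInf ?_
      rintro J ⟨hJx, hJprime⟩
      have hcomap_prime : (J.comap φ).IsPrime := hJprime.comap φ
      have hcomap_le : J.comap φ ≤ p := by
        intro a haJ
        by_contra hap
        have : IsUnit (φ a) := IsLocalization.map_units A (⟨a, hap⟩ : p.primeCompl)
        exact hJprime.ne_top (J.eq_top_of_isUnit_mem haJ this)
      have hxcomap : Ideal.span {x} ≤ J.comap φ := by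
        rw [Ideal.span_le, Set.singleton_subset_iff]
        exact hJx (Ideal.mem_span_singleton_self (φ x))
      have hple : p ≤ J.comap φ := hpmin.2 ⟨hcomap_prime, hxcomap⟩ hcomap_le
      have hpcomap : J.comap φ = p := le_antisymm hcomap_le hple
      have hmc : (J.comap φ).map φ = J := IsLocalization.map_comap p.primeCompl A J
      rw [hpcomap] at hmc
      rw [← hmc, ← Localization.AtPrime.map_eq_maximalIdeal]
  obtain ⟨k, hk⟩ : ∃ k, IsLocalRing.maximalIdeal A ^ k ≤ Ideal.span {φ x} :=
    Ideal.exists_pow_le_of_le_radical_of_fg (le_of_eq hrad.symm) (IsNoetherian.noetherian _)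
  exact pit_local' hqprime hq0 hxq' hxm' hk

private lemma height_one' {R : Type*} [CommRing R] [IsDomain R] (hdim : ringKrullDim R = 2)
    {P M : Ideal R} (hP : P.IsPrime) (hM : M.IsPrime) (h0 : ⊥ < P) (hPM : P < M) :
    Order.height (⟨P, hP⟩ : PrimeSpectrum R) = 1 := by
  have hltPS : ∀ x y : PrimeSpectrum R, x < y ↔ x.asIdeal < y.asIdeal := fun x y => Iff.rfl
  apply le_antisymm
  · rw [show (1 : ℕ∞) = ((1 : ℕ) : ℕ∞) from rfl, Order.height_le_coe_iff]
    intro y hy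
    rw [show ((1:ℕ) : ℕ∞) = 0 + 1 from by norm_num, ENat.lt_add_one_iff (by norm_num),
      nonpos_iff_eq_zero, Order.height_eq_zero]
    intro z hz
    by_contra hyz
    have hzy : z < y := lt_of_le_of_ne hz (fun h => hyz (le_of_eq h.symm))
    exact dim_le_two_chain' hdim z.isPrime y.isPrime hP hM
      ((hltPS _ _).mp hzy) ((hltPS _ _).mp hy) hPM
  · rw [ENat.one_le_iff_ne_zero, Ne, Order.height_eq_zero]
    intro hmin
    exact absurd (hmin (le_of_lt ((hltPS ⟨⊥, Ideal.bot_prime⟩ ⟨P, hP⟩).mpr h0))) (not_le_of_gt h0)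

private lemma avoid' {R : Type*} [CommRing R] {M : Ideal R} (T : Finset (Ideal R))
    (hT : ∀ I ∈ T, I.IsPrime) (hnle : ∀ I ∈ T, ¬ M ≤ I) : ∃ z ∈ M, ∀ I ∈ T, z ∉ I := by
  by_contra hcon
  push_neg at hcon
  have hsub : (M : Set R) ⊆ ⋃ I ∈ T, (I : Set R) := by
    intro z hz
    obtain ⟨I, hI, hzI⟩ := hcon z hz
    exact Set.mem_biUnion hI hzI
  obtain ⟨I, hI, hMI⟩ := (Ideal.subset_union_prime (f := fun I : Ideal R => I) M M
    (fun I hIT _ _ => hT I hIT)).mp hsub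
  exact hnle I hI hMI

private lemma exists_mem_all_not_mem' {R : Type*} [CommRing R] {N₀ : Ideal R} (hN₀ : N₀.IsPrime)
    (G : Finset (Ideal R)) (hG : ∀ I ∈ G, ¬ I ≤ N₀) : ∃ a, (∀ I ∈ G, a ∈ I) ∧ a ∉ N₀ := by
  classical
  induction G using Finset.induction with
  | empty => exact ⟨1, by simp, fun h => hN₀.ne_top ((Ideal.eq_top_iff_one N₀).mpr h)⟩
  | @insert I₀ G hI₀G ih =>
    obtain ⟨a, haG, haN₀⟩ := ih (fun I hI => hG I (Finset.mem_insert_of_mem hI))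
    obtain ⟨b, hbI₀, hbN₀⟩ := SetLike.not_le_iff_exists.mp (hG I₀ (Finset.mem_insert_self I₀ G))
    refine ⟨b * a, ?_, fun h => (hN₀.mem_or_mem h).elim hbN₀ haN₀⟩
    intro I hI
    rcases Finset.mem_insert.mp hI with rfl | hI
    · exact I.mul_mem_right a hbI₀
    · exact I.mul_mem_left b (haG I hI)

private lemma crt_adjust' {R : Type*} [CommRing R] {M : Ideal R} (hM : M.IsMaximal) (x y : R)
    (F : Finset (Ideal R)) (hFmax : ∀ N ∈ F, N.IsMaximal) (hFne : ∀ N ∈ F, N ≠ M)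
    (hy : ∀ N ∈ F, y ∉ N) (r₀ : R) :
    ∃ r : R, r - r₀ ∈ M ∧ ∀ N ∈ F, x + r * y ∉ N := by
  classical
  induction F using Finset.induction with
  | empty => exact ⟨r₀, by simp, by simp⟩
  | @insert N₀ F hN₀F ih =>
    obtain ⟨r, hrM, hr⟩ := ih (fun N hN => hFmax N (Finset.mem_insert_of_mem hN))
      (fun N hN => hFne N (Finset.mem_insert_of_mem hN))
      (fun N hN => hy N (Finset.mem_insert_of_mem hN))
    have hN₀max : N₀.IsMaximal := hFmax N₀ (Finset.mem_insert_self N₀ F)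
    have hN₀prime : N₀.IsPrime := hN₀max.isPrime
    have hyN₀ : y ∉ N₀ := hy N₀ (Finset.mem_insert_self N₀ F)
    have hG : ∀ I ∈ insert M F, ¬ I ≤ N₀ := by
      intro I hI
      rcases Finset.mem_insert.mp hI with rfl | hI
      · intro h
        exact hFne N₀ (Finset.mem_insert_self N₀ F) (hM.eq_of_le hN₀prime.ne_top h).symm
      · intro h
        exact hN₀F
          (((hFmax I (Finset.mem_insert_of_mem hI)).eq_of_le hN₀prime.ne_top h) ▸ hI)
    obtain ⟨a, haG, haN₀⟩ := exists_mem_all_not_mem' hN₀prime (insert M F) hG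
    set t : R := if x + r * y ∈ N₀ then 1 else 0 with ht
    refine ⟨r + a * t, ?_, ?_⟩
    · have : (r + a * t) - r₀ = (r - r₀) + a * t := by ring
      rw [this]
      exact M.add_mem hrM (M.mul_mem_right t (haG M (Finset.mem_insert_self M F)))
    · intro N hN
      rcases Finset.mem_insert.mp hN with rfl | hN
      · by_cases hcase : x + r * y ∈ N
        · have htt : t = 1 := if_pos hcase
          rw [htt]
          intro hmem
          have : x + (r + a * 1) * y - (x + r * y) ∈ N := N.sub_mem hmem hcase
          have h2 : a * y ∈ N := by
            have he : x + (r + a * 1) * y - (x + r * y) = a * y := by ring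
            rwa [he] at this
          exact (hN₀prime.mem_or_mem h2).elim haN₀ hyN₀
        · have htt : t = 0 := if_neg hcase
          rw [htt]
          intro hmem
          exact hcase (by
            have he : x + (r + a * 0) * y = x + r * y := by ring
            rwa [he] at hmem)
      · intro hmem
        have haN : a ∈ N := haG N (Finset.mem_insert_of_mem hN)
        have : x + (r + a * t) * y - a * t * y ∈ N := N.sub_mem hmem (N.mul_mem_right y (N.mul_mem_right t haN))
        have he : x + (r + a * t) * y - a * t * y = x + r * y := by ring
        rw [he] at this
        exact hr N hN this

end Aux

/-- For a two-dimensional semilocal Noetherian domain `R` and a maximal ideal `M` of height 2,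
the class `[M/0]` of height-one primes contained in `M` and in no other maximal ideal has
cardinality at least `ℵ₀ + |R/M|`. -/
theorem card_class_ge {R : Type*} [CommRing R] [IsDomain R] [IsNoetherianRing R]
    (hdim : ringKrullDim R = 2)
    (hsemi : {I : Ideal R | I.IsMaximal}.Finite)
    (M : Ideal R) (hM : M.IsMaximal)
    (hht : Order.height (⟨M, hM.isPrime⟩ : PrimeSpectrum R) = 2) :
    Cardinal.aleph0 + Cardinal.mk (R ⧸ M) ≤
      Cardinal.mk {P : PrimeSpectrum R | Order.height P = 1 ∧ P.asIdeal < M ∧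
        ∀ N : Ideal R, N.IsMaximal → P.asIdeal ≤ N → N = M} := by
  classical
  set S : Set (PrimeSpectrum R) := {P : PrimeSpectrum R | Order.height P = 1 ∧ P.asIdeal < M ∧
    ∀ N : Ideal R, N.IsMaximal → P.asIdeal ≤ N → N = M} with hSdef
  have hltPS : ∀ x y : PrimeSpectrum R, x < y ↔ x.asIdeal < y.asIdeal := fun x y => Iff.rfl
  -- extract a chain ⊥ < Q < M
  obtain ⟨ch, hch_last, hch_len⟩ := Order.exists_series_of_height_eq_coe
    (⟨M, hM.isPrime⟩ : PrimeSpectrum R) (n := 2) (by exact_mod_cast hht)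
  have h1lt : (1 : ℕ) < ch.length + 1 := by omega
  set Q : Ideal R := (ch ⟨1, by omega⟩).asIdeal with hQdef
  have hQprime : Q.IsPrime := (ch ⟨1, by omega⟩).isPrime
  have hQM : Q < M := by
    have hlt : (⟨1, by omega⟩ : Fin (ch.length + 1)) < Fin.last ch.length := by
      rw [Fin.lt_def]
      simp [hch_len]
    have := ch.strictMono hlt
    rw [show ch (Fin.last ch.length) = ch.last from rfl, hch_last] at this
    exact (hltPS _ _).mp this
  have hQ0 : ⊥ < Q := by
    have hlt : (⟨0, by omega⟩ : Fin (ch.length + 1)) < ⟨1, by omega⟩ := by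
      rw [Fin.lt_def]; norm_num
    have h01 := (hltPS _ _).mp (ch.strictMono hlt)
    exact lt_of_le_of_lt bot_le h01
  -- finset of other maximal ideals
  set F : Finset (Ideal R) := hsemi.toFinset.erase M with hF
  have hFmax : ∀ N ∈ F, N.IsMaximal := fun N hN =>
    hsemi.mem_toFinset.mp (Finset.mem_of_mem_erase hN)
  have hFne : ∀ N ∈ F, N ≠ M := fun N hN => Finset.ne_of_mem_erase hN
  have hFnle : ∀ N ∈ F, ¬ M ≤ N := fun N hN h =>
    hFne N hN (hM.eq_of_le (hFmax N hN).isPrime.ne_top h).symm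
  have hmemF : ∀ N : Ideal R, N.IsMaximal → N ≠ M → N ∈ F := fun N hN hne =>
    Finset.mem_erase.mpr ⟨hne, hsemi.mem_toFinset.mpr hN⟩
  -- S is infinite
  have hSinf : S.Infinite := by
    intro hfin
    set T : Finset (Ideal R) := (hfin.toFinset.image PrimeSpectrum.asIdeal) ∪ F ∪ {⊥} with hT
    have hTprime : ∀ I ∈ T, I.IsPrime := by
      intro I hI
      rcases Finset.mem_union.mp hI with hI | hI
      · rcases Finset.mem_union.mp hI with hI | hI
        · obtain ⟨P, _, rfl⟩ := Finset.mem_image.mp hI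
          exact P.isPrime
        · exact (hFmax I hI).isPrime
      · rw [Finset.mem_singleton.mp hI]
        exact Ideal.bot_prime
    have hTnle : ∀ I ∈ T, ¬ M ≤ I := by
      intro I hI
      rcases Finset.mem_union.mp hI with hI | hI
      · rcases Finset.mem_union.mp hI with hI | hI
        · obtain ⟨P, hP, rfl⟩ := Finset.mem_image.mp hI
          have : P.asIdeal < M := (hfin.mem_toFinset.mp hP).2.1
          exact fun h => absurd (le_antisymm this.le h) this.ne
        · exact hFnle I hI
      · rw [Finset.mem_singleton.mp hI]
        exact fun h => (hQ0.trans hQM).not_ge h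
    obtain ⟨z, hzM, hz⟩ := avoid' T hTprime hTnle
    have hz0 : z ≠ 0 := by
      intro h
      exact hz ⊥ (Finset.mem_union_right _ (Finset.mem_singleton_self ⊥)) (by simp [h])
    obtain ⟨P, hPprime, hzP, hP0, hPM⟩ := exists_prime_between' hM hQprime hQ0 hQM hzM hz0
    have hPS : (⟨P, hPprime⟩ : PrimeSpectrum R) ∈ S := by
      refine ⟨height_one' hdim hPprime hM.isPrime hP0 hPM, hPM, ?_⟩
      intro N hN hPN
      by_contra hne
      exact hz N (Finset.mem_union_left _ (Finset.mem_union_right _ (hmemF N hN hne))) (hPN hzP)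
    have : P ∈ hfin.toFinset.image PrimeSpectrum.asIdeal :=
      Finset.mem_image.mpr ⟨⟨P, hPprime⟩, hfin.mem_toFinset.mpr hPS, rfl⟩
    exact hz P (Finset.mem_union_left _ (Finset.mem_union_left _ this)) hzP
  -- pick x ∈ Q nonzero
  obtain ⟨x, hxQ, hx0⟩ := Submodule.exists_mem_ne_zero_of_ne_bot (ne_of_gt hQ0)
  have hxM : x ∈ M := hQM.le hxQ
  -- minimal primes of (x)
  haveI : IsNoetherianRing (R ⧸ Ideal.span {x}) :=
    isNoetherianRing_of_surjective R _ (Ideal.Quotient.mk (Ideal.span {x}))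
      Ideal.Quotient.mk_surjective
  have hUfin : (Ideal.span {x}).minimalPrimes.Finite := by
    rw [Ideal.minimalPrimes_eq_comap]
    exact (minimalPrimes.finite_of_isNoetherianRing (R ⧸ Ideal.span {x})).image _
  have hUprime : ∀ p ∈ (Ideal.span {x}).minimalPrimes, p.IsPrime := fun p hp => hp.1.1
  have hMnotinU : M ∉ (Ideal.span {x}).minimalPrimes := by
    intro hMmin
    obtain ⟨p', hp'min, hp'Q⟩ := Ideal.exists_minimalPrimes_le
      (show Ideal.span {x} ≤ Q by rwa [Ideal.span_le, Set.singleton_subset_iff])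
    have hMlep' : M ≤ p' := hMmin.2 hp'min.1 (hp'Q.trans hQM.le)
    exact absurd (hMlep'.trans hp'Q) (not_le_of_gt hQM)
  have hUnle : ∀ p ∈ (Ideal.span {x}).minimalPrimes, ¬ M ≤ p := by
    intro p hp hMp
    have : M = p := hM.eq_of_le (hUprime p hp).ne_top hMp
    exact hMnotinU (this ▸ hp)
  -- choose y
  obtain ⟨y, hyM, hy⟩ := avoid' (hUfin.toFinset ∪ F)
    (fun I hI => (Finset.mem_union.mp hI).elim
      (fun h => hUprime I (hUfin.mem_toFinset.mp h)) (fun h => (hFmax I h).isPrime))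
    (fun I hI => (Finset.mem_union.mp hI).elim
      (fun h => hUnle I (hUfin.mem_toFinset.mp h)) (fun h => hFnle I h))
  have hyU : ∀ p ∈ (Ideal.span {x}).minimalPrimes, y ∉ p := fun p hp =>
    hy p (Finset.mem_union_left _ (hUfin.mem_toFinset.mpr hp))
  have hyF : ∀ N ∈ F, y ∉ N := fun N hN => hy N (Finset.mem_union_right _ hN)
  -- key fact: any prime P with x ∈ P, P < M is a minimal prime of (x), hence y ∉ P
  have hkey : ∀ P : Ideal R, P.IsPrime → P < M → x ∈ P → y ∉ P := by
    intro P hP hPM hxP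
    have hPmin : P ∈ (Ideal.span {x}).minimalPrimes := by
      constructor
      · exact ⟨hP, by rwa [Ideal.span_le, Set.singleton_subset_iff]⟩
      · rintro p' ⟨hp'prime, hp'x⟩ hp'P
        by_contra hne
        have hp'lt : p' < P := lt_of_le_of_ne hp'P (fun h => hne (le_of_eq h.symm))
        have hxp' : x ∈ p' := hp'x (Ideal.mem_span_singleton_self x)
        have hp'0 : ⊥ < p' := bot_lt_iff_ne_bot.mpr (fun h => hx0 (by simpa [h] using hxp'))
        exact dim_le_two_chain' hdim Ideal.bot_prime hp'prime hP hM.isPrime hp'0 hp'lt hPM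
    exact hyU P hPmin
  -- per-coset existence
  have hmain : ∀ c : R ⧸ M, c ≠ 0 → ∃ P : PrimeSpectrum R, P ∈ S ∧
      ∃ r : R, Ideal.Quotient.mk M r = c ∧ x + r * y ∈ P.asIdeal := by
    intro c hc
    obtain ⟨r₀, hr₀⟩ := Ideal.Quotient.mk_surjective c
    obtain ⟨r, hrM, hr⟩ := crt_adjust' hM x y F hFmax hFne hyF r₀
    have hmkr : Ideal.Quotient.mk M r = c := by
      rw [← hr₀]
      exact Ideal.Quotient.mk_eq_mk_iff_sub_mem r r₀ |>.mpr hrM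
    set z : R := x + r * y with hz
    have hzM : z ∈ M := M.add_mem hxM (M.mul_mem_left r hyM)
    have hz0 : z ≠ 0 := by
      intro h0
      obtain ⟨p', hp'min, hp'Q⟩ := Ideal.exists_minimalPrimes_le
        (show Ideal.span {x} ≤ Q by rwa [Ideal.span_le, Set.singleton_subset_iff])
      have hxp' : x ∈ p' := hp'min.1.2 (Ideal.mem_span_singleton_self x)
      have hryp' : r * y ∈ p' := by
        have he : r * y = z - x := by rw [hz]; ring
        rw [he, h0, zero_sub]
        exact p'.neg_mem hxp'
      rcases hp'min.1.1.mem_or_mem hryp' with hrp' | hyp'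
      · have : r ∈ M := (hp'Q.trans hQM.le) hrp'
        exact hc (by rw [← hmkr, Ideal.Quotient.eq_zero_iff_mem.mpr this])
      · exact hyU p' hp'min hyp'
    obtain ⟨P, hPprime, hzP, hP0, hPM⟩ := exists_prime_between' hM hQprime hQ0 hQM hzM hz0
    refine ⟨⟨P, hPprime⟩, ⟨height_one' hdim hPprime hM.isPrime hP0 hPM, hPM, ?_⟩, r, hmkr, hzP⟩
    intro N hN hPN
    by_contra hne
    exact hr N (hmemF N hN hne) (hPN hzP)
  -- injection from nonzero cosets into S
  let g : {c : R ⧸ M // c ≠ 0} → ↥S := fun c =>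
    ⟨(hmain c.1 c.2).choose, (hmain c.1 c.2).choose_spec.1⟩
  have hginj : Function.Injective g := by
    intro c₁ c₂ hcc
    obtain ⟨r₁, hmk₁, hz₁⟩ := (hmain c₁.1 c₁.2).choose_spec.2
    obtain ⟨r₂, hmk₂, hz₂⟩ := (hmain c₂.1 c₂.2).choose_spec.2
    set P := (hmain c₁.1 c₁.2).choose with hP
    have hPeq : (hmain c₂.1 c₂.2).choose = P := congrArg Subtype.val hcc.symm
    rw [hPeq] at hz₂
    have hPS : P ∈ S := (hmain c₁.1 c₁.2).choose_spec.1
    have hPM : P.asIdeal < M := hPS.2.1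
    have hsub : (r₁ - r₂) * y ∈ P.asIdeal := by
      have : (x + r₁ * y) - (x + r₂ * y) ∈ P.asIdeal := P.asIdeal.sub_mem hz₁ hz₂
      have he : (x + r₁ * y) - (x + r₂ * y) = (r₁ - r₂) * y := by ring
      rwa [he] at this
    have hyP : y ∉ P.asIdeal := by
      intro hyP'
      have hxP : x ∈ P.asIdeal := by
        have : (x + r₁ * y) - r₁ * y ∈ P.asIdeal :=
          P.asIdeal.sub_mem hz₁ (P.asIdeal.mul_mem_left r₁ hyP')
        simpa using this
      exact hkey P.asIdeal P.isPrime hPM hxP hyP'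
    have hrr : r₁ - r₂ ∈ M := hPM.le ((P.isPrime.mem_or_mem hsub).resolve_right hyP)
    have : c₁.1 = c₂.1 := by
      rw [← hmk₁, ← hmk₂]
      exact Ideal.Quotient.mk_eq_mk_iff_sub_mem r₁ r₂ |>.mpr hrr
    exact Subtype.ext this
  have hcard1 : Cardinal.mk {c : R ⧸ M // c ≠ 0} ≤ Cardinal.mk ↥S :=
    Cardinal.mk_le_of_injective hginj
  have hScard : Cardinal.aleph0 ≤ Cardinal.mk ↥S := by
    rw [← Cardinal.infinite_iff]
    exact hSinf.to_subtype
  have h2 : Cardinal.mk (R ⧸ M) ≤ Cardinal.aleph0 + Cardinal.mk ↥S := by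
    have hs : Cardinal.mk (({(0 : R ⧸ M)}ᶜ : Set (R ⧸ M))) = Cardinal.mk {c : R ⧸ M // c ≠ 0} :=
      Cardinal.mk_congr (Equiv.subtypeEquivRight (fun c => by simp))
    have hsum := Cardinal.mk_sum_compl ({(0 : R ⧸ M)} : Set (R ⧸ M))
    rw [Cardinal.mk_singleton, hs] at hsum
    calc Cardinal.mk (R ⧸ M) = 1 + Cardinal.mk {c : R ⧸ M // c ≠ 0} := hsum.symm
      _ ≤ Cardinal.aleph0 + Cardinal.mk ↥S := add_le_add Cardinal.one_le_aleph0 hcard1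
  calc Cardinal.aleph0 + Cardinal.mk (R ⧸ M)
      ≤ Cardinal.aleph0 + (Cardinal.aleph0 + Cardinal.mk ↥S) := add_le_add le_rfl h2
    _ = (Cardinal.aleph0 + Cardinal.aleph0) + Cardinal.mk ↥S := (add_assoc _ _ _).symm
    _ = Cardinal.aleph0 + Cardinal.mk ↥S := by rw [Cardinal.aleph0_add_aleph0]
    _ ≤ Cardinal.mk ↥S + Cardinal.mk ↥S := add_le_add hScard le_rfl
    _ = Cardinal.mk ↥S := Cardinal.add_eq_self hScard
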